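/- For the full 3×3 neighborhood F = (1/x + 1 + x)(1/y + 1 + y) (Odd-rule 777), b_n = |F^{2^n-1}| = c_n², where c_n = (2^{n+2} - (-1)^n)/3; i.e., b_n is the square of the Jacobsthal-type sequence. -/

import Mathlib

/-- The ring `R = GF(2)[x, x⁻¹, y, y⁻¹]`, with `x^i y^j` the element
`AddMonoidAlgebra.single (i, j) 1`. -/
abbrev R2 := AddMonoidAlgebra (ZMod 2) (ℤ × ℤ)

/-- The monomial `x^i y^j` of `R`. -/
noncomputable def mon (i j : ℤ) : R2 := AddMonoidAlgebra.single (i, j) 1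

/-! ### One-variable auxiliary development -/

/-- `GF(2)[x, x⁻¹]`. -/
abbrev A1 := AddMonoidAlgebra (ZMod 2) ℤ

/-- The monomial `x^k`. -/
noncomputable def X (k : ℤ) : A1 := AddMonoidAlgebra.single k 1

lemma X_mul (a b : ℤ) : X a * X b = X (a + b) := by
  unfold X; rw [AddMonoidAlgebra.single_mul_single, one_mul]

lemma X_add_self (a : ℤ) : X a + X a = 0 := by
  unfold X
  rw [← AddMonoidAlgebra.single_add, show (1 + 1 : ZMod 2) = 0 from rfl,
    AddMonoidAlgebra.single_zero]

lemma X_apply (a j : ℤ) : (X a).coeff j = if a = j then 1 else 0 := by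
  unfold X
  exact Finsupp.single_apply

lemma sq_char2 (a b : A1) : (a + b) ^ 2 = a ^ 2 + b ^ 2 := by
  have h2 : (2 : A1) = 0 := by
    have h1 : (2 : A1) = X 0 + X 0 := by
      rw [show ((2:A1) = 1 + 1) from by norm_num, AddMonoidAlgebra.one_def]
      rfl
    rw [h1, X_add_self]
  calc (a + b) ^ 2 = a ^ 2 + 2 * (a * b) + b ^ 2 := by ring
    _ = a ^ 2 + b ^ 2 := by rw [h2]; ring

lemma pow_frob (a b : A1) (n : ℕ) : (a + b) ^ (2 ^ n) = a ^ (2 ^ n) + b ^ (2 ^ n) := by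
  induction n with
  | zero => simp
  | succ n ih =>
    have h : 2 ^ (n + 1) = 2 ^ n * 2 := by ring
    rw [h, pow_mul, pow_mul, pow_mul, ih, sq_char2]

lemma X_pow (a : ℤ) (k : ℕ) : (X a) ^ k = X (k * a) := by
  unfold X
  rw [AddMonoidAlgebra.single_pow, one_pow, nsmul_eq_mul]

/-- The polynomial `p = x⁻¹ + 1 + x`. -/
noncomputable def p1 : A1 := X (-1) + X 0 + X 1

lemma p1_frob (n : ℕ) : p1 ^ (2 ^ n) = X (-((2:ℤ) ^ n)) + X 0 + X ((2:ℤ) ^ n) := by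
  unfold p1
  rw [pow_frob, pow_frob, X_pow, X_pow, X_pow]
  rw [show ((2 ^ n : ℕ) : ℤ) * (-1) = -((2:ℤ) ^ n) by push_cast; ring,
    show ((2 ^ n : ℕ) : ℤ) * 0 = (0:ℤ) by ring,
    show ((2 ^ n : ℕ) : ℤ) * 1 = ((2:ℤ) ^ n) by push_cast; ring]

/-- The support set of `p1 ^ (2^n - 1)` where `m = 2^n - 1`. -/
noncomputable def Sf (m : ℤ) : Finset ℤ :=
  (Finset.Icc (-m) m).filter fun s => (s ≤ 0 ∧ (s + m) % 3 ≠ 2) ∨ (0 ≤ s ∧ (m - s) % 3 ≠ 2)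

noncomputable def Tf (m : ℤ) : Finset ℤ :=
  (Finset.Icc (-m) (2 * m + 1)).filter fun j => (j + m) % 3 ≠ 2

lemma mem_Sf {m s : ℤ} :
    s ∈ Sf m ↔ (-m ≤ s ∧ s ≤ m ∧
      ((s ≤ 0 ∧ (s + m) % 3 ≠ 2) ∨ (0 ≤ s ∧ (m - s) % 3 ≠ 2))) := by
  simp [Sf, Finset.mem_Icc, and_assoc]

lemma mem_Tf {m j : ℤ} :
    j ∈ Tf m ↔ (-m ≤ j ∧ j ≤ 2 * m + 1 ∧ (j + m) % 3 ≠ 2) := by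
  simp [Tf, Finset.mem_Icc, and_assoc]

noncomputable def Qs (m : ℤ) : A1 := ∑ s ∈ Sf m, X s

noncomputable def Rs (m : ℤ) : A1 := ∑ j ∈ Tf m, X j

lemma sum_X_apply (F : Finset ℤ) (j : ℤ) :
    (∑ s ∈ F, X s).coeff j = if j ∈ F then 1 else 0 := by
  rw [AddMonoidAlgebra.coeff_sum, Finset.sum_apply']
  simp only [X_apply]
  exact Finset.sum_ite_eq' F j fun _ => 1

lemma Qs_apply (m j : ℤ) : (Qs m).coeff j = if j ∈ Sf m then 1 else 0 := sum_X_apply _ _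

lemma Rs_apply (m j : ℤ) : (Rs m).coeff j = if j ∈ Tf m then 1 else 0 := sum_X_apply _ _

lemma mul_X_apply (f : A1) (c j : ℤ) : (f * X c).coeff j = f.coeff (j - c) := by
  unfold X
  rw [AddMonoidAlgebra.coeff_mul_single_apply, mul_one, sub_eq_add_neg]

/-- Key combinatorial identity F:  `Qs m * (1 + x^(m+1)) = Rs m` for `m % 3 ≠ 2`. -/
lemma mainF (m : ℤ) (hm : 0 ≤ m) (h3 : m % 3 ≠ 2) :
    Qs m * (X 0 + X (m + 1)) = Rs m := by
  apply AddMonoidAlgebra.coeff_injective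
  apply Finsupp.ext
  intro j
  rw [mul_add, AddMonoidAlgebra.coeff_add, Finsupp.add_apply, mul_X_apply, mul_X_apply, sub_zero,
    Qs_apply, Qs_apply, Rs_apply]
  by_cases hA : j ∈ Sf m <;> by_cases hB : j - (m + 1) ∈ Sf m <;>
      simp only [hA, hB, if_true, if_false] <;> rw [mem_Sf] at hA hB
  · have hC : j ∉ Tf m := (by
      rw [mem_Tf]
      have hm3 : m % 3 = 0 ∨ m % 3 = 1 ∨ m % 3 = 2 := by omega
      have hj3 : j % 3 = 0 ∨ j % 3 = 1 ∨ j % 3 = 2 := by omega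
      rcases hm3 with h | h | h <;> rcases hj3 with h' | h' | h' <;> omega)
    rw [if_neg hC]; decide
  · have hC : j ∈ Tf m := (by
      rw [mem_Tf]
      have hm3 : m % 3 = 0 ∨ m % 3 = 1 ∨ m % 3 = 2 := by omega
      have hj3 : j % 3 = 0 ∨ j % 3 = 1 ∨ j % 3 = 2 := by omega
      rcases hm3 with h | h | h <;> rcases hj3 with h' | h' | h' <;> omega)
    rw [if_pos hC, add_zero]
  · have hC : j ∈ Tf m := (by
      rw [mem_Tf]
      have hm3 : m % 3 = 0 ∨ m % 3 = 1 ∨ m % 3 = 2 := by omega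
      have hj3 : j % 3 = 0 ∨ j % 3 = 1 ∨ j % 3 = 2 := by omega
      rcases hm3 with h | h | h <;> rcases hj3 with h' | h' | h' <;> omega)
    rw [if_pos hC, zero_add]
  · have hC : j ∉ Tf m := (by
      rw [mem_Tf]
      have hm3 : m % 3 = 0 ∨ m % 3 = 1 ∨ m % 3 = 2 := by omega
      have hj3 : j % 3 = 0 ∨ j % 3 = 1 ∨ j % 3 = 2 := by omega
      rcases hm3 with h | h | h <;> rcases hj3 with h' | h' | h' <;> omega)
    rw [if_neg hC, add_zero]

/-- Key combinatorial identity E-step: `Rs m * (x^-(m+1) + x^(2(m+1))) = Rs (2m+1)`. -/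
lemma stepE (m : ℤ) (hm : 0 ≤ m) :
    Rs m * (X (-(m + 1)) + X (2 * (m + 1))) = Rs (2 * m + 1) := by
  apply AddMonoidAlgebra.coeff_injective
  apply Finsupp.ext
  intro j
  rw [mul_add, AddMonoidAlgebra.coeff_add, Finsupp.add_apply, mul_X_apply, mul_X_apply, sub_neg_eq_add,
    Rs_apply, Rs_apply, Rs_apply]
  by_cases hA : j + (m + 1) ∈ Tf m <;> by_cases hB : j - 2 * (m + 1) ∈ Tf m <;>
      simp only [hA, hB, if_true, if_false] <;> rw [mem_Tf] at hA hB
  · exfalso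
    have hm3 : m % 3 = 0 ∨ m % 3 = 1 ∨ m % 3 = 2 := by omega
    have hj3 : j % 3 = 0 ∨ j % 3 = 1 ∨ j % 3 = 2 := by omega
    rcases hm3 with h | h | h <;> rcases hj3 with h' | h' | h' <;> omega
  · have hC : j ∈ Tf (2 * m + 1) := (by
      rw [mem_Tf]
      have hm3 : m % 3 = 0 ∨ m % 3 = 1 ∨ m % 3 = 2 := by omega
      have hj3 : j % 3 = 0 ∨ j % 3 = 1 ∨ j % 3 = 2 := by omega
      rcases hm3 with h | h | h <;> rcases hj3 with h' | h' | h' <;> omega)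
    rw [if_pos hC, add_zero]
  · have hC : j ∈ Tf (2 * m + 1) := (by
      rw [mem_Tf]
      have hm3 : m % 3 = 0 ∨ m % 3 = 1 ∨ m % 3 = 2 := by omega
      have hj3 : j % 3 = 0 ∨ j % 3 = 1 ∨ j % 3 = 2 := by omega
      rcases hm3 with h | h | h <;> rcases hj3 with h' | h' | h' <;> omega)
    rw [if_pos hC, zero_add]
  · have hC : j ∉ Tf (2 * m + 1) := (by
      rw [mem_Tf]
      have hm3 : m % 3 = 0 ∨ m % 3 = 1 ∨ m % 3 = 2 := by omega
      have hj3 : j % 3 = 0 ∨ j % 3 = 1 ∨ j % 3 = 2 := by omega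
      rcases hm3 with h | h | h <;> rcases hj3 with h' | h' | h' <;> omega)
    rw [if_neg hC, add_zero]

lemma Tf_zero : Tf 0 = {0, 1} := by
  ext j
  rw [mem_Tf]
  simp only [Finset.mem_insert, Finset.mem_singleton]
  omega

lemma mainE (n : ℕ) :
    p1 ^ (2 ^ n - 1) * (X 0 + X ((2:ℤ) ^ n)) = Rs ((2:ℤ) ^ n - 1) := by
  induction n with
  | zero =>
    norm_num
    rw [Rs, Tf_zero, Finset.sum_insert (by decide), Finset.sum_singleton]
  | succ n ih =>
    have h2n : (0:ℤ) < 2 ^ n := by positivity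
    have e1 : 2 ^ (n + 1) - 1 = (2 ^ n - 1) + 2 ^ n := by
      have : 1 ≤ 2 ^ n := Nat.one_le_two_pow
      omega
    have hsq : X 0 + X ((2:ℤ) ^ (n + 1)) = (X 0 + X ((2:ℤ) ^ n)) ^ 2 := by
      rw [sq_char2, X_pow, X_pow,
        show ((2:ℕ):ℤ) * (0:ℤ) = 0 by ring,
        show ((2:ℕ):ℤ) * ((2:ℤ) ^ n) = (2:ℤ) ^ (n + 1) by push_cast; ring]
    have hmul : p1 ^ (2 ^ n) * (X 0 + X ((2:ℤ) ^ n))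
        = X (-((2:ℤ) ^ n)) + X (2 * (2:ℤ) ^ n) := by
      rw [p1_frob]
      rw [add_mul, add_mul, mul_add, mul_add, mul_add,
        X_mul, X_mul, X_mul, X_mul, X_mul, X_mul]
      rw [show (-(2:ℤ)^n + 0) = -((2:ℤ)^n) by ring,
        show ((0:ℤ) + 0) = (0:ℤ) by ring,
        show ((2:ℤ)^n + 0) = (2:ℤ)^n by ring,
        show (-(2:ℤ)^n + 2^n) = (0:ℤ) by ring,
        show ((0:ℤ) + 2^n) = (2:ℤ)^n by ring,
        show ((2:ℤ)^n + 2^n) = 2 * (2:ℤ)^n by ring]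
      linear_combination (X_add_self 0) + (X_add_self ((2:ℤ)^n))
    calc p1 ^ (2 ^ (n + 1) - 1) * (X 0 + X ((2:ℤ) ^ (n + 1)))
        = (p1 ^ (2 ^ n - 1) * (X 0 + X ((2:ℤ) ^ n))) *
          (p1 ^ (2 ^ n) * (X 0 + X ((2:ℤ) ^ n))) := by
          rw [e1, pow_add, hsq]; ring
      _ = Rs ((2:ℤ) ^ n - 1) * (X (-((2:ℤ) ^ n)) + X (2 * (2:ℤ) ^ n)) := by
          rw [ih, hmul]
      _ = Rs ((2:ℤ) ^ (n + 1) - 1) := by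
          have hst := stepE ((2:ℤ) ^ n - 1) (by omega)
          rw [show ((2:ℤ) ^ n - 1 + 1) = (2:ℤ) ^ n by ring] at hst
          rw [hst, show (2 * ((2:ℤ) ^ n - 1) + 1) = (2:ℤ) ^ (n + 1) - 1 by ring]

lemma pow2_mod3 (n : ℕ) :
    (2 ^ n % 3 = 1 ∧ ((-1:ℤ)) ^ n = 1) ∨ (2 ^ n % 3 = 2 ∧ ((-1:ℤ)) ^ n = -1) := by
  induction n with
  | zero => left; norm_num
  | succ n ih =>
    have h : 2 ^ (n + 1) = 2 * 2 ^ n := by ring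
    rcases ih with ⟨h1, h2⟩ | ⟨h1, h2⟩
    · right; exact ⟨by omega, by rw [pow_succ, h2]; ring⟩
    · left; exact ⟨by omega, by rw [pow_succ, h2]; ring⟩

lemma cast_two_pow (n : ℕ) : ((2 ^ n : ℕ) : ℤ) = (2:ℤ) ^ n := by push_cast; ring

lemma p1_eq_Qs (n : ℕ) : p1 ^ (2 ^ n - 1) = Qs ((2:ℤ) ^ n - 1) := by
  have h2n : (0:ℤ) < 2 ^ n := by positivity
  have hm : (0:ℤ) ≤ 2 ^ n - 1 := by omega
  have h3 : ((2:ℤ) ^ n - 1) % 3 ≠ 2 := by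
    rw [← cast_two_pow n]
    rcases pow2_mod3 n with ⟨h1, _⟩ | ⟨h1, _⟩ <;> omega
  have hne : X 0 + X ((2:ℤ) ^ n) ≠ 0 := by
    intro h
    have h0 : (X 0 + X ((2:ℤ) ^ n)).coeff 0 = 0 := by rw [h]; rfl
    rw [AddMonoidAlgebra.coeff_add, Finsupp.add_apply, X_apply, X_apply, if_pos rfl, if_neg (by omega)] at h0
    norm_num at h0
  have hF := mainF ((2:ℤ) ^ n - 1) hm h3
  rw [show ((2:ℤ) ^ n - 1 + 1) = (2:ℤ) ^ n by ring] at hF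
  exact mul_right_cancel₀ hne (by rw [hF, mainE n])

/-! ### Counting -/

lemma countL (t : ℕ) :
    ((Finset.Icc (0:ℤ) (t:ℤ)).filter fun k => ¬(k % 3 = 2)).card = t + 1 - (t + 1) / 3 := by
  induction t with
  | zero => decide
  | succ t ih =>
    have hIcc : Finset.Icc (0:ℤ) ((t + 1 : ℕ) : ℤ)
        = insert ((t:ℤ)+1) (Finset.Icc (0:ℤ) (t:ℤ)) := by
      ext k
      simp only [Finset.mem_insert, Finset.mem_Icc]
      push_cast
      omega
    rw [hIcc, Finset.filter_insert]
    by_cases h : ((t:ℤ) + 1) % 3 = 2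
    · rw [if_neg (by simpa using h), ih]
      omega
    · rw [if_pos (by simpa using h),
        Finset.card_insert_of_notMem (by simp only [Finset.mem_filter, Finset.mem_Icc]; omega),
        ih]
      omega

lemma countL2 (t : ℕ) :
    ((Finset.Icc (0:ℤ) ((t:ℤ) - 1)).filter fun k => ¬(k % 3 = 2)).card = t - t / 3 := by
  match t with
  | 0 => decide
  | (t' + 1) =>
    rw [show (((t' + 1 : ℕ) : ℤ) - 1) = (t' : ℤ) by push_cast; ring, countL t']

lemma card_Sf (t : ℕ) : (Sf (t:ℤ)).card = (t - t / 3) + (t + 1 - (t + 1) / 3) := by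
  classical
  set N : Finset ℤ := ((Finset.Icc (0:ℤ) ((t:ℤ)-1)).filter fun k => ¬(k % 3 = 2)).image
      (fun k => k - t) with hN
  set P : Finset ℤ := ((Finset.Icc (0:ℤ) (t:ℤ)).filter fun k => ¬(k % 3 = 2)).image
      (fun k => (t:ℤ) - k) with hP
  have hunion : Sf (t:ℤ) = N ∪ P := by
    ext s
    simp only [hN, hP, Finset.mem_union, Finset.mem_image, Finset.mem_filter, Finset.mem_Icc,
      mem_Sf]
    constructor
    · rintro ⟨hl, hr, ⟨hs0, hmod⟩ | ⟨hs0, hmod⟩⟩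
      · rcases eq_or_lt_of_le hs0 with rfl | hlt
        · right; exact ⟨(t:ℤ), ⟨by omega, by omega⟩, by omega⟩
        · left; exact ⟨s + t, ⟨by omega, by omega⟩, by omega⟩
      · right; exact ⟨(t:ℤ) - s, ⟨by omega, by omega⟩, by omega⟩
    · rintro (⟨k, ⟨⟨hk1, hk2⟩, hk3⟩, rfl⟩ | ⟨k, ⟨⟨hk1, hk2⟩, hk3⟩, rfl⟩)
      · exact ⟨by omega, by omega, Or.inl ⟨by omega, by omega⟩⟩
      · exact ⟨by omega, by omega, Or.inr ⟨by omega, by omega⟩⟩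
  have hdisj : Disjoint N P := by
    rw [Finset.disjoint_left]
    intro s hs hs'
    simp only [hN, hP, Finset.mem_image, Finset.mem_filter, Finset.mem_Icc] at hs hs'
    obtain ⟨k, ⟨⟨hk1, hk2⟩, hk3⟩, rfl⟩ := hs
    obtain ⟨k', ⟨⟨hk1', hk2'⟩, hk3'⟩, he⟩ := hs'
    omega
  have hNc : N.card = t - t / 3 := by
    rw [hN, Finset.card_image_of_injective _ (fun a b h => by omega), countL2 t]
  have hPc : P.card = t + 1 - (t + 1) / 3 := by
    rw [hP, Finset.card_image_of_injective _ (fun a b h => by omega), countL t]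
  rw [hunion, Finset.card_union_of_disjoint hdisj, hNc, hPc]

/-! ### Two-variable assembly -/

noncomputable def phiX : A1 →+* R2 :=
  AddMonoidAlgebra.mapDomainRingHom (ZMod 2) (AddMonoidHom.inl ℤ ℤ)

noncomputable def phiY : A1 →+* R2 :=
  AddMonoidAlgebra.mapDomainRingHom (ZMod 2) (AddMonoidHom.inr ℤ ℤ)

lemma phiX_X (s : ℤ) : phiX (X s) = mon s 0 := by
  unfold phiX X mon
  rw [AddMonoidAlgebra.mapDomainRingHom_apply, AddMonoidAlgebra.mapDomain_single]
  rfl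

lemma phiY_X (s : ℤ) : phiY (X s) = mon 0 s := by
  unfold phiY X mon
  rw [AddMonoidAlgebra.mapDomainRingHom_apply, AddMonoidAlgebra.mapDomain_single]
  rfl

lemma support_sum_single (F : Finset (ℤ × ℤ)) :
    (∑ q ∈ F, (AddMonoidAlgebra.single q (1 : ZMod 2) : R2)).coeff.support = F := by
  classical
  ext a
  rw [Finsupp.mem_support_iff, AddMonoidAlgebra.coeff_sum, Finset.sum_apply']
  simp only [AddMonoidAlgebra.coeff_single, Finsupp.single_apply]
  rw [Finset.sum_ite_eq' F a fun _ => 1]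
  by_cases h : a ∈ F <;> simp [h]

theorem oddRule777_growth (n : ℕ) :
    ((((mon (-1) 0 + mon 0 0 + mon 1 0) * (mon 0 (-1) + mon 0 0 + mon 0 1))
        ^ (2 ^ n - 1)).coeff.support.card : ℤ)
      = (((2 : ℤ) ^ (n + 2) - (-1) ^ n) / 3) ^ 2 := by
  classical
  have h1t : 1 ≤ 2 ^ n := Nat.one_le_two_pow
  have hcast : (((2 ^ n - 1 : ℕ)) : ℤ) = (2:ℤ) ^ n - 1 := by
    rw [← cast_two_pow n]; omega
  set m : ℤ := (2:ℤ) ^ n - 1 with hm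
  have hx : mon (-1) 0 + mon 0 0 + mon 1 0 = phiX p1 := by
    rw [p1, map_add, map_add, phiX_X, phiX_X, phiX_X]
  have hy : mon 0 (-1) + mon 0 0 + mon 0 1 = phiY p1 := by
    rw [p1, map_add, map_add, phiY_X, phiY_X, phiY_X]
  have hprod :
      ((mon (-1) 0 + mon 0 0 + mon 1 0) * (mon 0 (-1) + mon 0 0 + mon 0 1)) ^ (2 ^ n - 1)
      = ∑ q ∈ Sf m ×ˢ Sf m, (AddMonoidAlgebra.single q (1 : ZMod 2) : R2) := by
    rw [hx, hy, mul_pow, ← map_pow, ← map_pow, p1_eq_Qs n, ← hm, Qs, map_sum, map_sum]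
    simp only [phiX_X, phiY_X]
    rw [Finset.sum_mul_sum, ← Finset.sum_product']
    apply Finset.sum_congr rfl
    intro q _
    rw [mon, mon, AddMonoidAlgebra.single_mul_single, one_mul]
    rw [show ((q.1, 0) + (0, q.2) : ℤ × ℤ) = (q.1, q.2) by simp]
  rw [hprod, support_sum_single, Finset.card_product]
  have hcard : (Sf m).card = ((2^n - 1 : ℕ) - (2^n - 1 : ℕ) / 3)
      + ((2^n - 1 : ℕ) + 1 - ((2^n - 1 : ℕ) + 1) / 3) := by
    rw [show m = ((2^n - 1 : ℕ) : ℤ) from hcast.symm]; exact card_Sf _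
  have h3card : 3 * ((Sf m).card : ℤ) = 2 ^ (n + 2) - (-1) ^ n := by
    have hpow : (2:ℤ) ^ (n + 2) = 4 * ((2 ^ n : ℕ) : ℤ) := by
      rw [cast_two_pow]; ring
    rcases pow2_mod3 n with ⟨h1, h2⟩ | ⟨h1, h2⟩ <;> rw [hpow, h2, hcard] <;> omega
  have h3 : ((2:ℤ) ^ (n + 2) - (-1) ^ n) / 3 = ((Sf m).card : ℤ) := by
    rw [← h3card, Int.mul_ediv_cancel_left _ (by norm_num)]
  rw [h3]
  push_cast
  ring
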